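/- Let n ≥ 1 and let f₁,…,fₙ and g₁,…,gₙ be holomorphic functions on the open unit disk D ⊆ ℂ. Assume that g₁(0) = 0, that g₁(t) ≠ 0 for every t ∈ D with t ≠ 0, and that f₁(t)·g₁′(t)/g₁(t) + Σ_{i=2}^{n} fᵢ(t)·gᵢ′(t) = 0 for every t ∈ D with t ≠ 0. Then f₁(0) = 0. -/

import Mathlib

open Metric Finset Filter Topology

/-- If `u` is analytic at `0`, then `deriv u` is continuous at `0`. -/
lemma continuousAt_deriv_of_analyticAt {u : ℂ → ℂ} (hu : AnalyticAt ℂ u 0) :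
    ContinuousAt (deriv u) 0 := by
  obtain ⟨s, hs, hsa⟩ := hu.exists_mem_nhds_analyticOnNhd
  obtain ⟨t, hts, ht, h0t⟩ := _root_.mem_nhds_iff.mp hs
  exact ((hsa.mono hts).deriv 0 h0t).continuousAt

/-- Key analytic step in the proof that the conormal of a natural analytic set is
Legendrian: if `f₁ g₁'/g₁ + ∑_{i≥2} fᵢ gᵢ' = 0` off the origin on the unit disk,
with all `fᵢ, gᵢ` holomorphic, `g₁(0) = 0` and `g₁ ≠ 0` off the origin,
then `f₁(0) = 0`. -/
theorem conormal_key_step (n : ℕ) (hn : 0 < n) (f g : Fin n → ℂ → ℂ)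
    (hf : ∀ i, DifferentiableOn ℂ (f i) (ball (0 : ℂ) 1))
    (hg : ∀ i, DifferentiableOn ℂ (g i) (ball (0 : ℂ) 1))
    (hg0 : g ⟨0, hn⟩ 0 = 0)
    (hgne : ∀ t ∈ ball (0 : ℂ) 1, t ≠ 0 → g ⟨0, hn⟩ t ≠ 0)
    (heq : ∀ t ∈ ball (0 : ℂ) 1, t ≠ 0 →
      f ⟨0, hn⟩ t * deriv (g ⟨0, hn⟩) t / g ⟨0, hn⟩ t
        + ∑ i ∈ Finset.univ.erase ⟨0, hn⟩, f i t * deriv (g i) t = 0) :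
    f ⟨0, hn⟩ 0 = 0 := by
  set i0 : Fin n := ⟨0, hn⟩ with hi0
  have h01 : (0 : ℂ) ∈ ball (0 : ℂ) 1 := by simp
  have hball : ball (0 : ℂ) 1 ∈ 𝓝 (0 : ℂ) := ball_mem_nhds 0 one_pos
  -- analyticity of everything at 0
  have hfA : ∀ i, AnalyticAt ℂ (f i) 0 := fun i => (hf i).analyticAt hball
  have hgA : ∀ i, AnalyticAt ℂ (g i) 0 := fun i => (hg i).analyticAt hball
  have hg'C : ∀ i : Fin n, ContinuousAt (deriv (g i)) 0 :=
    fun i => continuousAt_deriv_of_analyticAt (hgA i)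
  -- g i0 is not eventually zero at 0
  have hne : ¬ (∀ᶠ z in 𝓝 (0 : ℂ), g i0 z = 0) := by
    intro h
    obtain ⟨ε, hε, hεsub⟩ := Metric.eventually_nhds_iff_ball.mp (h.and (isOpen_ball.eventually_mem h01))
    have hmem : (ε/2 : ℂ) ∈ ball (0 : ℂ) ε := by
      simp [abs_of_pos hε, half_lt_self hε, hε.le]
    obtain ⟨hz0, hzb⟩ := hεsub _ hmem
    exact hgne _ hzb (by simp [Complex.ext_iff, ne_of_gt hε]) hz0
  have hord : analyticOrderAt (g i0) 0 ≠ ⊤ := fun h => hne (analyticOrderAt_eq_top.mp h)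
  obtain ⟨k, hk⟩ : ∃ k : ℕ, analyticOrderAt (g i0) 0 = k := by
    lift analyticOrderAt (g i0) 0 to ℕ using hord with k hk; exact ⟨k, rfl⟩
  obtain ⟨u, huA, hu0, hueq⟩ := ((hgA i0).analyticOrderAt_eq_natCast (n := k)).mp hk
  have hev : ∀ᶠ z in 𝓝 (0 : ℂ), g i0 z = z ^ k * u z := by
    filter_upwards [hueq] with z hz; simpa [smul_eq_mul] using hz
  have hk0 : k ≠ 0 := by
    intro h
    subst h
    have h0 := hev.self_of_nhds
    simp only [pow_zero, one_mul] at h0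
    exact hu0 (h0 ▸ hg0)
  -- derivative of g i0 near 0
  have hu' : ∀ᶠ z in 𝓝 (0 : ℂ), DifferentiableAt ℂ u z := by
    filter_upwards [huA.eventually_analyticAt] with z hz using hz.differentiableAt
  have hder : ∀ᶠ z in 𝓝 (0 : ℂ),
      deriv (g i0) z = (k : ℂ) * z ^ (k - 1) * u z + z ^ k * deriv u z := by
    filter_upwards [Filter.EventuallyEq.deriv hev, hu'] with z hz hzu
    rw [hz, deriv_fun_mul (differentiableAt_pow k) hzu, deriv_pow_field]
    try ring
  -- the auxiliary function Φ
  set S : ℂ → ℂ := fun t => ∑ i ∈ Finset.univ.erase i0, f i t * deriv (g i) t with hS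
  set Φ : ℂ → ℂ := fun z =>
    f i0 z * ((k : ℂ) * u z + z * deriv u z) + z * u z * S z with hΦ
  -- Φ vanishes on a punctured neighborhood of 0
  have hΦ0 : ∀ᶠ z in 𝓝[≠] (0 : ℂ), Φ z = 0 := by
    have hb : ∀ᶠ z in 𝓝[≠] (0 : ℂ), z ∈ ball (0 : ℂ) 1 :=
      eventually_nhdsWithin_of_eventually_nhds (isOpen_ball.eventually_mem h01)
    filter_upwards [hb, eventually_nhdsWithin_of_eventually_nhds hev,
      eventually_nhdsWithin_of_eventually_nhds hder, self_mem_nhdsWithin]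
      with z hzb hzg hzd hz0
    have hgz : g i0 z ≠ 0 := hgne z hzb hz0
    have he := heq z hzb hz0
    rw [div_add' _ _ _ hgz, div_eq_zero_iff] at he
    have he2 : f i0 z * deriv (g i0) z + S z * g i0 z = 0 := he.resolve_right hgz
    rw [hzd, hzg] at he2
    have hzk : z ^ (k - 1) ≠ 0 := pow_ne_zero _ hz0
    have hfact : z ^ (k - 1) * Φ z = 0 := by
      rw [← he2, hΦ, hS]
      have : z ^ k = z ^ (k - 1) * z := by
        rw [← pow_succ, Nat.sub_add_cancel (Nat.one_le_iff_ne_zero.mpr hk0)]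
      rw [this]; ring
    exact (mul_eq_zero.mp hfact).resolve_left hzk
  -- Φ is continuous at 0
  have hΦcont : ContinuousAt Φ 0 := by
    have hScont : ContinuousAt S 0 := by
      exact tendsto_finset_sum _ fun i _ => ((hfA i).continuousAt).mul (hg'C i)
    exact (((hfA i0).continuousAt).mul
        ((continuousAt_const.mul huA.continuousAt).add
          (continuousAt_id.mul (continuousAt_deriv_of_analyticAt huA)))).add
      ((continuousAt_id.mul huA.continuousAt).mul hScont)
  -- conclude Φ 0 = 0 by taking limits along the punctured neighborhood
  have hlim1 : Tendsto Φ (𝓝[≠] (0 : ℂ)) (𝓝 (Φ 0)) :=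
    hΦcont.continuousWithinAt.tendsto
  have hlim2 : Tendsto Φ (𝓝[≠] (0 : ℂ)) (𝓝 0) :=
    Tendsto.congr' (hΦ0.mono fun z h => h.symm) tendsto_const_nhds
  have hΦ00 : Φ 0 = 0 := tendsto_nhds_unique hlim1 hlim2
  rw [hΦ] at hΦ00
  simp only [zero_mul, mul_zero, add_zero, zero_add] at hΦ00
  have : f i0 0 * ((k : ℂ) * u 0) = 0 := by simpa using hΦ00
  rcases mul_eq_zero.mp this with h | h
  · exact h
  · exact absurd (mul_eq_zero.mp h) (by
      push_neg
      exact ⟨Nat.cast_ne_zero.mpr hk0, hu0⟩)
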